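/- Let m ≥ 1, n = 32m³ + 16m² + 6m + 1, and let X be the circulant graph X(Z_n; {±1, ±(4m+1), ±(16m²+4m+1)}) (the largest known circulant graph of degree 6 and diameter k = 3m, isomorphism class 1). Then the total number of type T_1 vertices of X, i.e., the number of vertices v ≠ 0 having exactly one neighbor at distance dist(0,v) − 1 from 0, equals 4k = 12m. -/

import Mathlib

set_option maxHeartbeats 1000000

/-- The circulant graph `X(Z_n; {±g 0, …, ±g (f-1)})`: vertices are `ZMod n`, and distinct
`u, v` are adjacent iff `v - u ≡ ±g i (mod n)` for some `i`. -/
def circulant (n : ℕ) {f : ℕ} (g : Fin f → ℤ) : SimpleGraph (ZMod n) where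
  Adj u v := u ≠ v ∧ ∃ i, v - u = (g i : ZMod n) ∨ u - v = (g i : ZMod n)
  symm := by
    constructor
    rintro u v ⟨hne, i, h | h⟩
    · exact ⟨hne.symm, i, Or.inr h⟩
    · exact ⟨hne.symm, i, Or.inl h⟩
  loopless := by constructor; rintro u ⟨hne, -⟩; exact hne rfl

def sZ (m : ℕ) : ℤ := 4*(m:ℤ)+1
def tZ (m : ℕ) : ℤ := 16*(m:ℤ)^2+4*(m:ℤ)+1
def nN (m : ℕ) : ℤ := 32*(m:ℤ)^3+16*(m:ℤ)^2+6*(m:ℤ)+1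
def nNat (m : ℕ) : ℕ := 32*m^3+16*m^2+6*m+1

instance (m : ℕ) : NeZero (nNat m) := ⟨by unfold nNat; omega⟩

lemma nNat_cast (m : ℕ) : ((nNat m : ℕ) : ℤ) = nN m := by
  simp only [nNat, nN]; push_cast; ring

def gZ (m : ℕ) : Fin 3 → ℤ := ![1, sZ m, tZ m]

example (m : ℕ) : gZ m = ![(1 : ℤ), 4*(m : ℤ)+1, 16*(m : ℤ)^2+4*(m:ℤ)+1] := rfl

def GG (m : ℕ) : SimpleGraph (ZMod (nNat m)) := circulant (nNat m) (gZ m)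

def Rp (m : ℕ) (v : ZMod (nNat m)) (a b c : ℤ) : Prop :=
  ((a + b*sZ m + c*tZ m : ℤ) : ZMod (nNat m)) = v

noncomputable def DD (m : ℕ) (v : ZMod (nNat m)) : ℕ :=
  sInf {w | ∃ a b c, Rp m v a b c ∧ a.natAbs + b.natAbs + c.natAbs = w}

lemma cast_eq_iff_dvd (m : ℕ) (x y : ℤ) :
    ((x : ZMod (nNat m)) = (y : ZMod (nNat m))) ↔ (nN m) ∣ (x - y) := by
  rw [ZMod.intCast_eq_intCast_iff, ← nNat_cast m]
  constructor
  · intro h; exact h.symm.dvd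
  · intro h; exact (Int.modEq_iff_dvd.mpr h).symm

lemma rp_self (m : ℕ) (v : ZMod (nNat m)) : Rp m v v.val 0 0 := by
  simp only [Rp]
  push_cast
  simp [ZMod.natCast_val, ZMod.cast_id]

lemma DD_spec (m : ℕ) (v : ZMod (nNat m)) :
    ∃ a b c, Rp m v a b c ∧ a.natAbs + b.natAbs + c.natAbs = DD m v := by
  have hne : {w | ∃ a b c, Rp m v a b c ∧ a.natAbs + b.natAbs + c.natAbs = w}.Nonempty :=
    ⟨_, ⟨v.val, 0, 0, rp_self m v, rfl⟩⟩
  exact Nat.sInf_mem hne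

lemma DD_le (m : ℕ) (v : ZMod (nNat m)) {a b c : ℤ} (h : Rp m v a b c) :
    DD m v ≤ a.natAbs + b.natAbs + c.natAbs :=
  Nat.sInf_le ⟨a, b, c, h, rfl⟩

lemma Rp.shift {m : ℕ} {v : ZMod (nNat m)} {a b c : ℤ} (h : Rp m v a b c) (da db dc : ℤ) :
    Rp m (v + ((da + db*sZ m + dc*tZ m : ℤ) : ZMod (nNat m))) (a+da) (b+db) (c+dc) := by
  simp only [Rp] at h ⊢
  rw [← h]
  push_cast
  ring

lemma DD_zero (m : ℕ) : DD m 0 = 0 :=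
  Nat.le_zero.mp (by simpa using DD_le m 0 (a := 0) (b := 0) (c := 0) (by simp [Rp]))

lemma eq_zero_of_DD (m : ℕ) (v : ZMod (nNat m)) (h : DD m v = 0) : v = 0 := by
  obtain ⟨a, b, c, hr, hw⟩ := DD_spec m v
  rw [h] at hw
  have h1 : a = 0 := by omega
  have h2 : b = 0 := by omega
  have h3 : c = 0 := by omega
  subst h1; subst h2; subst h3
  simpa [Rp] using hr.symm

lemma gZ_bounds (m : ℕ) (hm : 1 ≤ m) : (1:ℤ) < sZ m ∧ sZ m < tZ m ∧ 2 * tZ m < nN m := by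
  simp only [sZ, tZ, nN]
  have hm' : (1:ℤ) ≤ (m:ℤ) := by exact_mod_cast hm
  refine ⟨by nlinarith, by nlinarith, by nlinarith⟩

lemma cast_small_ne_zero (m : ℕ) {z : ℤ} (h1 : z ≠ 0) (h2 : |z| < nN m) :
    ((z : ZMod (nNat m)) ≠ 0) := by
  intro hz
  have hd : (nN m) ∣ (z - 0) := (cast_eq_iff_dvd m z 0).mp (by simpa using hz)
  rw [sub_zero] at hd
  exact h1 (Int.eq_zero_of_abs_lt_dvd hd h2)

lemma gZ_pos (m : ℕ) (hm : 1 ≤ m) (i : Fin 3) : 0 < gZ m i ∧ gZ m i ≤ tZ m := by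
  obtain ⟨h1, h2, h3⟩ := gZ_bounds m hm
  fin_cases i <;> constructor <;> simp [gZ] <;> linarith

lemma abs_e {e : ℤ} (he : e = 1 ∨ e = -1) : |e| = 1 := by rcases he with he | he <;> subst he <;> simp

/-- the six signed generators are nonzero mod n -/
lemma sgen_ne_zero (m : ℕ) (hm : 1 ≤ m) (i : Fin 3) (e : ℤ) (he : e = 1 ∨ e = -1) :
    ((e * gZ m i : ℤ) : ZMod (nNat m)) ≠ 0 := by
  obtain ⟨h1, h2, h3⟩ := gZ_bounds m hm
  obtain ⟨hg0, hgt⟩ := gZ_pos m hm i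
  apply cast_small_ne_zero m
  · exact mul_ne_zero (by rcases he with he | he <;> subst he <;> norm_num) hg0.ne'
  · rw [abs_mul, abs_e he, one_mul, abs_of_pos hg0]; linarith

/-- distinct signed generators differ mod n -/
lemma sgen_ne (m : ℕ) (hm : 1 ≤ m) (i i' : Fin 3) (e e' : ℤ)
    (he : e = 1 ∨ e = -1) (he' : e' = 1 ∨ e' = -1) (hne : (i, e) ≠ (i', e')) :
    ((e * gZ m i : ℤ) : ZMod (nNat m)) ≠ ((e' * gZ m i' : ℤ) : ZMod (nNat m)) := by
  obtain ⟨h1, h2, h3⟩ := gZ_bounds m hm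
  obtain ⟨hg0, hgt⟩ := gZ_pos m hm i
  obtain ⟨hg0', hgt'⟩ := gZ_pos m hm i'
  rw [Ne, cast_eq_iff_dvd m]
  intro hd
  have habs : |e * gZ m i - e' * gZ m i'| < nN m := by
    calc |e * gZ m i - e' * gZ m i'| ≤ |e * gZ m i| + |e' * gZ m i'| := abs_sub _ _
      _ = gZ m i + gZ m i' := by
          rw [abs_mul, abs_mul, abs_e he, abs_e he', one_mul, one_mul,
            abs_of_pos hg0, abs_of_pos hg0']
      _ < nN m := by linarith
  have hz := Int.eq_zero_of_abs_lt_dvd hd habs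
  fin_cases i <;> fin_cases i' <;> rcases he with he | he <;> rcases he' with he' | he' <;>
    subst he <;> subst he' <;>
    first
      | exact hne rfl
      | (norm_num [gZ] at hz; linarith)
      | (norm_num [gZ] at hz; omega)
      | (norm_num [gZ] at hz)

lemma adj_iff (m : ℕ) (u v : ZMod (nNat m)) :
    (GG m).Adj v u ↔ v ≠ u ∧ ∃ i : Fin 3, ∃ e : ℤ, (e = 1 ∨ e = -1) ∧
      u = v + ((e * gZ m i : ℤ) : ZMod (nNat m)) := by
  constructor
  · rintro ⟨hne, i, h | h⟩
    · exact ⟨hne, i, 1, Or.inl rfl, by push_cast; rw [one_mul, ← h]; ring⟩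
    · refine ⟨hne, i, -1, Or.inr rfl, ?_⟩
      push_cast
      rw [← h]
      ring
  · rintro ⟨hne, i, e, he, hu⟩
    refine ⟨hne, i, ?_⟩
    rcases he with he | he <;> subst he <;> subst hu
    · left; push_cast; ring
    · right; push_cast; ring

/-- generic BFS characterization of graph distance -/
lemma dist_eq_of_potential {V : Type*} (G : SimpleGraph V) (v0 : V) (D : V → ℕ)
    (h0 : D v0 = 0) (hz : ∀ v, D v = 0 → v = v0)
    (hdesc : ∀ v, D v ≠ 0 → ∃ u, G.Adj u v ∧ D u + 1 = D v)
    (hlip : ∀ u v, G.Adj u v → D v ≤ D u + 1) :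
    ∀ v, G.dist v0 v = D v := by
  have walk : ∀ k v, D v = k → ∃ p : G.Walk v0 v, p.length = k := by
    intro k
    induction k with
    | zero =>
      intro v hv
      have hvz := hz v hv
      subst hvz
      exact ⟨SimpleGraph.Walk.nil, rfl⟩
    | succ k ih =>
      intro v hv
      obtain ⟨u, hadj, hu⟩ := hdesc v (by omega)
      obtain ⟨p, hp⟩ := ih u (by omega)
      exact ⟨p.concat hadj, by simp [SimpleGraph.Walk.length_concat, hp]⟩
  have lower : ∀ (u v : V) (p : G.Walk u v), D v ≤ D u + p.length := by
    intro u v p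
    induction p with
    | nil => simp
    | cons h q ih =>
      have := hlip _ _ h
      simp only [SimpleGraph.Walk.length_cons]
      omega
  intro v
  obtain ⟨p, hp⟩ := walk (D v) v rfl
  have hreach : G.Reachable v0 v := ⟨p⟩
  obtain ⟨q, hq⟩ := hreach.exists_walk_length_eq_dist
  have h1 : G.dist v0 v ≤ D v := hp ▸ SimpleGraph.dist_le p
  have h2 : D v ≤ D v0 + q.length := lower v0 v q
  omega

lemma rp_shift0 {m : ℕ} {v : ZMod (nNat m)} {a b c : ℤ} (h : Rp m v a b c) (e : ℤ) :
    Rp m (v + ((e * gZ m 0 : ℤ) : ZMod (nNat m))) (a+e) b c := by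
  have := h.shift e 0 0
  simpa [gZ] using this

lemma rp_shift1 {m : ℕ} {v : ZMod (nNat m)} {a b c : ℤ} (h : Rp m v a b c) (e : ℤ) :
    Rp m (v + ((e * gZ m 1 : ℤ) : ZMod (nNat m))) a (b+e) c := by
  have := h.shift 0 e 0
  simpa [gZ] using this

lemma rp_shift2 {m : ℕ} {v : ZMod (nNat m)} {a b c : ℤ} (h : Rp m v a b c) (e : ℤ) :
    Rp m (v + ((e * gZ m 2 : ℤ) : ZMod (nNat m))) a b (c+e) := by
  have := h.shift 0 0 e
  simpa [gZ] using this

lemma rp_shift_dir {m : ℕ} {v : ZMod (nNat m)} {a b c : ℤ} (h : Rp m v a b c)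
    (i : Fin 3) (e : ℤ) :
    ∃ a' b' c', Rp m (v + ((e * gZ m i : ℤ) : ZMod (nNat m))) a' b' c' ∧
      a'.natAbs + b'.natAbs + c'.natAbs ≤ a.natAbs + b.natAbs + c.natAbs + e.natAbs := by
  fin_cases i
  · exact ⟨a+e, b, c, rp_shift0 h e, by omega⟩
  · exact ⟨a, b+e, c, rp_shift1 h e, by omega⟩
  · exact ⟨a, b, c+e, rp_shift2 h e, by omega⟩

lemma DD_lip (m : ℕ) : ∀ u v : ZMod (nNat m), (GG m).Adj u v → DD m v ≤ DD m u + 1 := by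
  intro u v hadj
  rw [adj_iff] at hadj
  obtain ⟨hne, i, e, he, hv⟩ := hadj
  obtain ⟨a, b, c, hr, hw⟩ := DD_spec m u
  obtain ⟨a', b', c', hr', hw'⟩ := rp_shift_dir hr i e
  rw [← hv] at hr'
  have := DD_le m v hr'
  have he1 : e.natAbs = 1 := by rcases he with he | he <;> subst he <;> rfl
  omega

lemma DD_descent (m : ℕ) (hm : 1 ≤ m) :
    ∀ v : ZMod (nNat m), DD m v ≠ 0 → ∃ u, (GG m).Adj u v ∧ DD m u + 1 = DD m v := by
  intro v hv
  obtain ⟨a, b, c, hr, hw⟩ := DD_spec m v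
  have hcase : a ≠ 0 ∨ b ≠ 0 ∨ c ≠ 0 := by
    by_contra h
    push_neg at h
    obtain ⟨h1, h2, h3⟩ := h
    omega
  -- pick i, e with coordinate of sign e at position i nonzero
  obtain ⟨i, e, he, a', b', c', hr', hwlt⟩ :
      ∃ (i : Fin 3) (e : ℤ), (e = 1 ∨ e = -1) ∧ ∃ a' b' c',
        Rp m (v + (((-e) * gZ m i : ℤ) : ZMod (nNat m))) a' b' c' ∧
        a'.natAbs + b'.natAbs + c'.natAbs + 1 = a.natAbs + b.natAbs + c.natAbs := by
    rcases hcase with h | h | h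
    · rcases lt_or_gt_of_ne h with h' | h'
      · exact ⟨0, -1, Or.inr rfl, a+1, b, c, by simpa using rp_shift0 hr 1, by omega⟩
      · exact ⟨0, 1, Or.inl rfl, a-1, b, c, by simpa [← sub_eq_add_neg] using rp_shift0 hr (-1), by omega⟩
    · rcases lt_or_gt_of_ne h with h' | h'
      · exact ⟨1, -1, Or.inr rfl, a, b+1, c, by simpa using rp_shift1 hr 1, by omega⟩
      · exact ⟨1, 1, Or.inl rfl, a, b-1, c, by simpa [← sub_eq_add_neg] using rp_shift1 hr (-1), by omega⟩
    · rcases lt_or_gt_of_ne h with h' | h'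
      · exact ⟨2, -1, Or.inr rfl, a, b, c+1, by simpa using rp_shift2 hr 1, by omega⟩
      · exact ⟨2, 1, Or.inl rfl, a, b, c-1, by simpa [← sub_eq_add_neg] using rp_shift2 hr (-1), by omega⟩
  set u : ZMod (nNat m) := v + (((-e) * gZ m i : ℤ) : ZMod (nNat m)) with hu
  have hne : v ≠ u := by
    intro h
    have : (((-e) * gZ m i : ℤ) : ZMod (nNat m)) = 0 := by
      rw [hu] at h
      exact (left_eq_add.mp h)
    exact sgen_ne_zero m hm i (-e) (by rcases he with he | he <;> subst he <;> norm_num) this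
  have hadj : (GG m).Adj v u := by
    rw [adj_iff]
    exact ⟨hne, i, -e, by rcases he with he | he <;> subst he <;> norm_num, hu⟩
  have hDu : DD m u ≤ a'.natAbs + b'.natAbs + c'.natAbs := DD_le m u hr'
  have hDv : DD m v ≤ DD m u + 1 := DD_lip m u v hadj.symm
  exact ⟨u, hadj.symm, by omega⟩

lemma dist_eq_DD (m : ℕ) (hm : 1 ≤ m) (v : ZMod (nNat m)) : (GG m).dist 0 v = DD m v :=
  dist_eq_of_potential (GG m) 0 (DD m) (DD_zero m) (eq_zero_of_DD m) (DD_descent m hm)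
    (DD_lip m) v

section Master

variable {m j : ℕ} {a b c : ℤ}

lemma weight_bound (hw : a.natAbs + b.natAbs + c.natAbs ≤ j) :
    a + b*sZ m + c*tZ m ≤ (j:ℤ)*tZ m ∧ -((j:ℤ)*tZ m) ≤ a + b*sZ m + c*tZ m := by
  simp only [sZ, tZ]
  set S : ℤ := 4*(m:ℤ)+1 with hS
  set T : ℤ := 16*(m:ℤ)^2+4*(m:ℤ)+1 with hT
  have hm0 : (0:ℤ) ≤ (m:ℤ) := by positivity
  have hT1 : (1:ℤ) ≤ T := by nlinarith
  have hST : S ≤ T := by nlinarith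
  have hS0 : (0:ℤ) ≤ S := by positivity
  have hT0 : (0:ℤ) ≤ T := by linarith
  have ha : a ≤ (a.natAbs:ℤ) ∧ -(a.natAbs:ℤ) ≤ a := by omega
  have hb : b ≤ (b.natAbs:ℤ) ∧ -(b.natAbs:ℤ) ≤ b := by omega
  have hc : c ≤ (c.natAbs:ℤ) ∧ -(c.natAbs:ℤ) ≤ c := by omega
  have hj : (a.natAbs:ℤ) + (b.natAbs:ℤ) + (c.natAbs:ℤ) ≤ (j:ℤ) := by exact_mod_cast hw
  have h1 : b*S ≤ (b.natAbs:ℤ)*T :=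
    (mul_le_mul_of_nonneg_right hb.1 hS0).trans (mul_le_mul_of_nonneg_left hST (by positivity))
  have h1' : -((b.natAbs:ℤ)*T) ≤ b*S := by
    have := mul_le_mul_of_nonneg_right hb.2 hS0
    have h2 := mul_le_mul_of_nonneg_left hST (show (0:ℤ) ≤ (b.natAbs:ℤ) by positivity)
    nlinarith
  have h2 : c*T ≤ (c.natAbs:ℤ)*T := mul_le_mul_of_nonneg_right hc.1 hT0
  have h2' : -((c.natAbs:ℤ)*T) ≤ c*T := by nlinarith [mul_le_mul_of_nonneg_right hc.2 hT0]
  have h3 : a ≤ (a.natAbs:ℤ)*T := ha.1.trans (le_mul_of_one_le_right (by positivity) hT1)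
  have h3' : -((a.natAbs:ℤ)*T) ≤ a := by nlinarith [le_mul_of_one_le_right (show (0:ℤ) ≤ (a.natAbs:ℤ) by positivity) hT1]
  have h4 : ((a.natAbs:ℤ) + (b.natAbs:ℤ) + (c.natAbs:ℤ))*T ≤ (j:ℤ)*T :=
    mul_le_mul_of_nonneg_right hj hT0
  constructor <;> nlinarith

end Master

section Master2

variable {m j : ℕ} {a b c : ℤ}

lemma jt_lt (hm : 1 ≤ m) (hj2 : j ≤ 2*m) : (j:ℤ)*tZ m + (j:ℤ) < nN m := by
  simp only [tZ, nN]
  have hm' : (1:ℤ) ≤ (m:ℤ) := by exact_mod_cast hm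
  have hj' : (j:ℤ) ≤ 2*(m:ℤ) := by exact_mod_cast hj2
  have h0 : (0:ℤ) ≤ 16*(m:ℤ)^2+4*(m:ℤ)+1 := by positivity
  have := mul_le_mul_of_nonneg_right hj' h0
  nlinarith

/-- g = 1 : any representation of j (1 ≤ j ≤ 2m) of weight ≤ j is (j,0,0). -/
lemma master0 (hm : 1 ≤ m) (hj1 : 1 ≤ j) (hj2 : j ≤ 2*m)
    (hw : a.natAbs + b.natAbs + c.natAbs ≤ j)
    (hdvd : (nN m) ∣ (a + b*sZ m + c*tZ m - (j:ℤ))) :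
    a = j ∧ b = 0 ∧ c = 0 := by
  obtain ⟨k, hk⟩ := hdvd
  obtain ⟨hub, hlb⟩ := weight_bound hw
  have hjt := jt_lt hm hj2
  have hm' : (1:ℤ) ≤ (m:ℤ) := by exact_mod_cast hm
  have hj' : (j:ℤ) ≤ 2*(m:ℤ) := by exact_mod_cast hj2
  have hj1' : (1:ℤ) ≤ (j:ℤ) := by exact_mod_cast hj1
  have hN0 : (0:ℤ) < nN m := by simp only [nN]; positivity
  have hk0 : k = 0 := by
    rcases lt_trichotomy k 0 with h | h | h
    · exfalso
      have h1 : k ≤ -1 := by omega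
      have := mul_le_mul_of_nonneg_right h1 hN0.le
      -- k * N ≤ -N
      have h2 : a + b*sZ m + c*tZ m - (j:ℤ) ≤ -(nN m) := by
        calc a + b*sZ m + c*tZ m - (j:ℤ) = (nN m) * k := by linarith [hk]
          _ = k * nN m := by ring
          _ ≤ -1 * nN m := this
          _ = -(nN m) := by ring
      linarith
    · exact h
    · exfalso
      have h1 : (1:ℤ) ≤ k := by omega
      have := mul_le_mul_of_nonneg_right h1 hN0.le
      have h2 : (nN m) ≤ a + b*sZ m + c*tZ m - (j:ℤ) := by
        calc (nN m) = 1 * nN m := by ring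
          _ ≤ k * nN m := this
          _ = a + b*sZ m + c*tZ m - (j:ℤ) := by linarith [hk]
      linarith
  subst hk0
  -- exact equation
  have heq : a + b*sZ m + c*tZ m - (j:ℤ) = 0 := by linarith [hk]
  simp only [sZ, tZ] at heq
  have ha : a ≤ (a.natAbs:ℤ) ∧ -(a.natAbs:ℤ) ≤ a := by omega
  have hc' : c ≤ (c.natAbs:ℤ) ∧ -(c.natAbs:ℤ) ≤ c := by omega
  have hb' : b ≤ (b.natAbs:ℤ) ∧ -(b.natAbs:ℤ) ≤ b := by omega
  have hjc : (a.natAbs:ℤ) + (b.natAbs:ℤ) + (c.natAbs:ℤ) ≤ (j:ℤ) := by exact_mod_cast hw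
  set q : ℤ := b + 4*(m:ℤ)*c with hqdef
  have hfac : a + c - (j:ℤ) = -(4*(m:ℤ)+1) * q := by simp only [hqdef]; linarith [heq, mul_comm (4*(m:ℤ)) c]
  have hq0 : q = 0 := by
    rcases lt_trichotomy q 0 with h | h | h
    · exfalso
      have h1 : (1:ℤ) ≤ -q := by omega
      have := mul_le_mul_of_nonneg_left h1 (show (0:ℤ) ≤ 4*(m:ℤ)+1 by positivity)
      -- (4m+1) ≤ (4m+1)*(-q), so a+c-j ≥ 4m+1
      have h2 : 4*(m:ℤ)+1 ≤ a + c - (j:ℤ) := by nlinarith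
      omega
    · exact h
    · exfalso
      have h1 : (1:ℤ) ≤ q := by omega
      have := mul_le_mul_of_nonneg_left h1 (show (0:ℤ) ≤ 4*(m:ℤ)+1 by positivity)
      have h2 : a + c - (j:ℤ) ≤ -(4*(m:ℤ)+1) := by nlinarith
      omega
  have hbc : b = -(4*(m:ℤ))*c := by simp only [hqdef] at hq0; linarith
  have hc0 : c = 0 := by
    rcases lt_trichotomy c 0 with h | h | h
    · exfalso
      have h1 : (1:ℤ) ≤ -c := by omega
      have := mul_le_mul_of_nonneg_left h1 (show (0:ℤ) ≤ 4*(m:ℤ) by positivity)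
      have h2 : 4*(m:ℤ) ≤ b := by nlinarith
      omega
    · exact h
    · exfalso
      have h1 : (1:ℤ) ≤ c := by omega
      have := mul_le_mul_of_nonneg_left h1 (show (0:ℤ) ≤ 4*(m:ℤ) by positivity)
      have h2 : b ≤ -(4*(m:ℤ)) := by nlinarith
      omega
  subst hc0
  have hb0 : b = 0 := by omega
  subst hb0
  refine ⟨by linarith [heq], rfl, rfl⟩

end Master2

section Master3

variable {m j : ℕ} {a b c : ℤ}

lemma js_jt_lt (hm : 1 ≤ m) (hj2 : j ≤ 2*m) : (j:ℤ)*tZ m + (j:ℤ)*sZ m < nN m := by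
  simp only [tZ, sZ, nN]
  have hm' : (1:ℤ) ≤ (m:ℤ) := by exact_mod_cast hm
  have hj' : (j:ℤ) ≤ 2*(m:ℤ) := by exact_mod_cast hj2
  have h0 : (0:ℤ) ≤ 16*(m:ℤ)^2+4*(m:ℤ)+1 := by positivity
  have h1 : (0:ℤ) ≤ 4*(m:ℤ)+1 := by positivity
  have := mul_le_mul_of_nonneg_right hj' h0
  have := mul_le_mul_of_nonneg_right hj' h1
  nlinarith

/-- g = s : any representation of j·s (1 ≤ j ≤ 2m) of weight ≤ j is (0,j,0). -/
lemma master1 (hm : 1 ≤ m) (hj1 : 1 ≤ j) (hj2 : j ≤ 2*m)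
    (hw : a.natAbs + b.natAbs + c.natAbs ≤ j)
    (hdvd : (nN m) ∣ (a + b*sZ m + c*tZ m - (j:ℤ)*sZ m)) :
    a = 0 ∧ b = j ∧ c = 0 := by
  obtain ⟨k, hk⟩ := hdvd
  obtain ⟨hub, hlb⟩ := weight_bound hw
  have hjt := js_jt_lt hm hj2
  have hm' : (1:ℤ) ≤ (m:ℤ) := by exact_mod_cast hm
  have hj' : (j:ℤ) ≤ 2*(m:ℤ) := by exact_mod_cast hj2
  have hj1' : (1:ℤ) ≤ (j:ℤ) := by exact_mod_cast hj1
  have hN0 : (0:ℤ) < nN m := by simp only [nN]; positivity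
  have hjs0 : (0:ℤ) ≤ (j:ℤ)*sZ m := by simp only [sZ]; positivity
  have hjsjt : (j:ℤ)*sZ m ≤ (j:ℤ)*tZ m := by
    simp only [sZ, tZ]
    apply mul_le_mul_of_nonneg_left _ (by positivity)
    nlinarith
  have hk0 : k = 0 := by
    rcases lt_trichotomy k 0 with h | h | h
    · exfalso
      have h1 : k ≤ -1 := by omega
      have h3 := mul_le_mul_of_nonneg_right h1 hN0.le
      have h2 : a + b*sZ m + c*tZ m - (j:ℤ)*sZ m ≤ -(nN m) := by
        calc a + b*sZ m + c*tZ m - (j:ℤ)*sZ m = k * nN m := by linarith [hk]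
          _ ≤ -1 * nN m := h3
          _ = -(nN m) := by ring
      linarith
    · exact h
    · exfalso
      have h1 : (1:ℤ) ≤ k := by omega
      have h3 := mul_le_mul_of_nonneg_right h1 hN0.le
      have h2 : (nN m) ≤ a + b*sZ m + c*tZ m - (j:ℤ)*sZ m := by
        calc (nN m) = 1 * nN m := by ring
          _ ≤ k * nN m := h3
          _ = a + b*sZ m + c*tZ m - (j:ℤ)*sZ m := by linarith [hk]
      linarith
  subst hk0
  have heq : a + b*sZ m + c*tZ m - (j:ℤ)*sZ m = 0 := by linarith [hk]
  simp only [sZ, tZ] at heq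
  have hjc : (a.natAbs:ℤ) + (b.natAbs:ℤ) + (c.natAbs:ℤ) ≤ (j:ℤ) := by exact_mod_cast hw
  set q : ℤ := b - (j:ℤ) + 4*(m:ℤ)*c with hqdef
  have hfac : a + c = -(4*(m:ℤ)+1) * q := by simp only [hqdef]; nlinarith [heq]
  have hq0 : q = 0 := by
    rcases lt_trichotomy q 0 with h | h | h
    · exfalso
      have h1 : (1:ℤ) ≤ -q := by omega
      have := mul_le_mul_of_nonneg_left h1 (show (0:ℤ) ≤ 4*(m:ℤ)+1 by positivity)
      have h2 : 4*(m:ℤ)+1 ≤ a + c := by nlinarith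
      omega
    · exact h
    · exfalso
      have h1 : (1:ℤ) ≤ q := by omega
      have := mul_le_mul_of_nonneg_left h1 (show (0:ℤ) ≤ 4*(m:ℤ)+1 by positivity)
      have h2 : a + c ≤ -(4*(m:ℤ)+1) := by nlinarith
      omega
  have hac : a = -c := by rw [hq0, mul_zero] at hfac; linarith
  have hbc : b = (j:ℤ) - 4*(m:ℤ)*c := by simp only [hqdef] at hq0; linarith
  have hc0 : c = 0 := by
    rcases lt_trichotomy c 0 with h | h | h
    · exfalso
      have h1 : (1:ℤ) ≤ -c := by omega
      have := mul_le_mul_of_nonneg_left h1 (show (0:ℤ) ≤ 4*(m:ℤ) by positivity)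
      have h2 : (j:ℤ) + 4*(m:ℤ) ≤ b := by nlinarith
      omega
    · exact h
    · exfalso
      have h1 : (1:ℤ) ≤ c := by omega
      have := mul_le_mul_of_nonneg_left h1 (show (0:ℤ) ≤ 4*(m:ℤ) by positivity)
      have h2 : b ≤ (j:ℤ) - 4*(m:ℤ) := by nlinarith
      -- weight: |a| = |c| ≥ 1, so |b| ≤ j - 2; but |b| ≥ 4m - j ≥ 2m ≥ j > j-2
      omega
  subst hc0
  refine ⟨by omega, by omega, rfl⟩

end Master3

section MasterT
variable {m j : ℕ} {a b c : ℤ}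

/-- g = t : any representation of j·t (1 ≤ j ≤ 2m) of weight ≤ j is (0,0,j). -/
lemma master2 (hm : 1 ≤ m) (hj1 : 1 ≤ j) (hj2 : j ≤ 2*m)
    (hw : a.natAbs + b.natAbs + c.natAbs ≤ j)
    (hdvd : (nN m) ∣ (a + b*sZ m + c*tZ m - (j:ℤ)*tZ m)) :
    a = 0 ∧ b = 0 ∧ c = j := by
  obtain ⟨k, hk⟩ := hdvd
  obtain ⟨hub, hlb⟩ := weight_bound hw
  have hm' : (1:ℤ) ≤ (m:ℤ) := by exact_mod_cast hm
  have hj' : (j:ℤ) ≤ 2*(m:ℤ) := by exact_mod_cast hj2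
  have hj1' : (1:ℤ) ≤ (j:ℤ) := by exact_mod_cast hj1
  have hN0 : (0:ℤ) < nN m := by simp only [nN]; positivity
  have hjc : (a.natAbs:ℤ) + (b.natAbs:ℤ) + (c.natAbs:ℤ) ≤ (j:ℤ) := by exact_mod_cast hw
  -- 2*j*t < 2*N
  have h2jt : 2*((j:ℤ)*tZ m) < 2*(nN m) := by
    simp only [tZ, nN]
    have h0 : (0:ℤ) ≤ 16*(m:ℤ)^2+4*(m:ℤ)+1 := by positivity
    have := mul_le_mul_of_nonneg_right hj' h0
    nlinarith
  have hk0 : k = 0 ∨ k = -1 := by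
    rcases lt_trichotomy k (-1) with h | h | h
    · exfalso
      have h1 : k ≤ -2 := by omega
      have h3 := mul_le_mul_of_nonneg_right h1 hN0.le
      have h2 : a + b*sZ m + c*tZ m - (j:ℤ)*tZ m ≤ -2*(nN m) := by
        calc a + b*sZ m + c*tZ m - (j:ℤ)*tZ m = k * nN m := by linarith [hk]
          _ ≤ -2 * nN m := h3
          _ = -2*(nN m) := by ring
      linarith
    · right; exact h
    · rcases lt_trichotomy k 0 with h' | h' | h'
      · omega
      · left; exact h'
      · exfalso
        have h1 : (1:ℤ) ≤ k := by omega
        have h3 := mul_le_mul_of_nonneg_right h1 hN0.le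
        have h2 : (nN m) ≤ a + b*sZ m + c*tZ m - (j:ℤ)*tZ m := by
          calc (nN m) = 1 * nN m := by ring
            _ ≤ k * nN m := h3
            _ = a + b*sZ m + c*tZ m - (j:ℤ)*tZ m := by linarith [hk]
        linarith
  rcases hk0 with hk0 | hk0
  · subst hk0
    have heq : a + b*sZ m + c*tZ m - (j:ℤ)*tZ m = 0 := by linarith [hk]
    simp only [sZ, tZ] at heq
    set q : ℤ := b + 4*(m:ℤ)*(c - (j:ℤ)) with hqdef
    have hfac : a + c - (j:ℤ) = -(4*(m:ℤ)+1) * q := by simp only [hqdef]; nlinarith [heq]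
    have hq0 : q = 0 := by
      rcases lt_trichotomy q 0 with h | h | h
      · exfalso
        have h1 : (1:ℤ) ≤ -q := by omega
        have := mul_le_mul_of_nonneg_left h1 (show (0:ℤ) ≤ 4*(m:ℤ)+1 by positivity)
        have h2 : 4*(m:ℤ)+1 ≤ a + c - (j:ℤ) := by nlinarith
        omega
      · exact h
      · exfalso
        have h1 : (1:ℤ) ≤ q := by omega
        have := mul_le_mul_of_nonneg_left h1 (show (0:ℤ) ≤ 4*(m:ℤ)+1 by positivity)
        have h2 : a + c - (j:ℤ) ≤ -(4*(m:ℤ)+1) := by nlinarith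
        omega
    have hac : a + c = (j:ℤ) := by rw [hq0, mul_zero] at hfac; linarith
    have hba : b = 4*(m:ℤ)*a := by
      simp only [hqdef] at hq0
      nlinarith [hq0]
    have ha0 : a = 0 := by
      rcases lt_trichotomy a 0 with h | h | h
      · exfalso
        have h1 : (1:ℤ) ≤ -a := by omega
        have := mul_le_mul_of_nonneg_left h1 (show (0:ℤ) ≤ 4*(m:ℤ) by positivity)
        have h2 : b ≤ -(4*(m:ℤ)) := by nlinarith
        omega
      · exact h
      · exfalso
        have h1 : (1:ℤ) ≤ a := by omega
        have := mul_le_mul_of_nonneg_left h1 (show (0:ℤ) ≤ 4*(m:ℤ) by positivity)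
        have h2 : 4*(m:ℤ) ≤ b := by nlinarith
        omega
    subst ha0
    refine ⟨rfl, by omega, by omega⟩
  · subst hk0
    have heq : a + b*sZ m + c*tZ m - (j:ℤ)*tZ m + nN m = 0 := by linarith [hk]
    simp only [sZ, tZ, nN] at heq
    set q : ℤ := b + 2*(m:ℤ) + 4*(m:ℤ)*(c - (j:ℤ) + 2*(m:ℤ)) with hqdef
    set A : ℤ := a + c + 4*(m:ℤ) + 1 - (j:ℤ) with hAdef
    have hfac : A = -(4*(m:ℤ)+1) * q := by simp only [hqdef, hAdef]; nlinarith [heq]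
    have hA1 : 1 ≤ A := by simp only [hAdef]; omega
    have hA2 : A ≤ 4*(m:ℤ)+1 := by simp only [hAdef]; omega
    have hq : q = -1 := by
      rcases lt_trichotomy q (-1) with h | h | h
      · exfalso
        have h1 : (2:ℤ) ≤ -q := by omega
        have := mul_le_mul_of_nonneg_left h1 (show (0:ℤ) ≤ 4*(m:ℤ)+1 by positivity)
        have h2 : 2*(4*(m:ℤ)+1) ≤ A := by nlinarith
        omega
      · exact h
      · exfalso
        have h1 : (0:ℤ) ≤ q := by omega
        have := mul_le_mul_of_nonneg_left h1 (show (0:ℤ) ≤ 4*(m:ℤ)+1 by positivity)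
        have h2 : A ≤ 0 := by nlinarith
        omega
    have hac : a + c = (j:ℤ) := by
      rw [hq] at hfac; simp only [hAdef] at hfac; linarith
    have hb : b = -1 - 2*(m:ℤ) - 8*(m:ℤ)^2 + 4*(m:ℤ)*a := by
      rw [hq] at hqdef
      have : c - (j:ℤ) = -a := by linarith
      nlinarith [hqdef, this]
    exfalso
    -- 4*m*a ≤ 8*m^2 since a ≤ j ≤ 2m
    have haj : a ≤ (j:ℤ) := by omega
    have h1 : a ≤ 2*(m:ℤ) := by omega
    have := mul_le_mul_of_nonneg_left h1 (show (0:ℤ) ≤ 4*(m:ℤ) by positivity)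
    have h2 : b ≤ -1 - 2*(m:ℤ) := by nlinarith
    omega

end MasterT


/-- the candidate T₁ vertices -/
def vT (m : ℕ) (i : Fin 3) (e : ℤ) (j : ℕ) : ZMod (nNat m) :=
  ((e * j * gZ m i : ℤ) : ZMod (nNat m))

lemma rp_pure0 (m : ℕ) (e : ℤ) (j : ℕ) : Rp m (vT m 0 e j) (e*j) 0 0 := by
  simp only [Rp, vT]
  congr 1
  show e*(j:ℤ) + 0*sZ m + 0*tZ m = e*(j:ℤ)*1
  ring

lemma rp_pure1 (m : ℕ) (e : ℤ) (j : ℕ) : Rp m (vT m 1 e j) 0 (e*j) 0 := by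
  simp only [Rp, vT]
  congr 1
  show (0:ℤ) + e*(j:ℤ)*sZ m + 0*tZ m = e*(j:ℤ)*sZ m
  ring

lemma rp_pure2 (m : ℕ) (e : ℤ) (j : ℕ) : Rp m (vT m 2 e j) 0 0 (e*j) := by
  simp only [Rp, vT]
  congr 1
  show (0:ℤ) + 0*sZ m + e*(j:ℤ)*tZ m = e*(j:ℤ)*tZ m
  ring

lemma rp_dvd {m : ℕ} {v : ZMod (nNat m)} {a b c a' b' c' : ℤ}
    (h : Rp m v a b c) (h' : Rp m v a' b' c') :
    (nN m) ∣ ((a + b*sZ m + c*tZ m) - (a' + b'*sZ m + c'*tZ m)) := by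
  rw [← cast_eq_iff_dvd m]
  simp only [Rp] at h h'
  rw [h, h']

lemma master_sgn0 {m : ℕ} (hm : 1 ≤ m) {e : ℤ} (he : e = 1 ∨ e = -1)
    {j : ℕ} (hj1 : 1 ≤ j) (hj2 : j ≤ 2*m) {a b c : ℤ}
    (hw : a.natAbs + b.natAbs + c.natAbs ≤ j)
    (hr : Rp m (vT m 0 e j) a b c) :
    a = e*(j:ℤ) ∧ b = 0 ∧ c = 0 := by
  have hdvd := rp_dvd hr (rp_pure0 m e j)
  rcases he with he | he <;> subst he
  · have := master0 hm hj1 hj2 hw (by convert hdvd using 1; ring)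
    refine ⟨by omega, this.2.1, this.2.2⟩
  · have hdvd' : (nN m) ∣ ((-a) + (-b)*sZ m + (-c)*tZ m - (j:ℤ)) := by
      have heq : ((-a) + (-b)*sZ m + (-c)*tZ m - (j:ℤ)) =
          -((a + b*sZ m + c*tZ m) - ((-1)*(j:ℤ) + 0*sZ m + 0*tZ m)) := by ring
      rw [heq]
      exact hdvd.neg_right
    have := master0 hm hj1 hj2 (by omega) hdvd'
    refine ⟨by omega, by omega, by omega⟩

lemma master_sgn1 {m : ℕ} (hm : 1 ≤ m) {e : ℤ} (he : e = 1 ∨ e = -1)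
    {j : ℕ} (hj1 : 1 ≤ j) (hj2 : j ≤ 2*m) {a b c : ℤ}
    (hw : a.natAbs + b.natAbs + c.natAbs ≤ j)
    (hr : Rp m (vT m 1 e j) a b c) :
    a = 0 ∧ b = e*(j:ℤ) ∧ c = 0 := by
  have hdvd := rp_dvd hr (rp_pure1 m e j)
  rcases he with he | he <;> subst he
  · have := master1 hm hj1 hj2 hw (by convert hdvd using 1; ring)
    refine ⟨this.1, by omega, this.2.2⟩
  · have hdvd' : (nN m) ∣ ((-a) + (-b)*sZ m + (-c)*tZ m - (j:ℤ)*sZ m) := by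
      have heq : ((-a) + (-b)*sZ m + (-c)*tZ m - (j:ℤ)*sZ m) =
          -((a + b*sZ m + c*tZ m) - (0 + (-1)*(j:ℤ)*sZ m + 0*tZ m)) := by ring
      rw [heq]
      exact hdvd.neg_right
    have := master1 hm hj1 hj2 (by omega) hdvd'
    refine ⟨by omega, by omega, by omega⟩

lemma master_sgn2 {m : ℕ} (hm : 1 ≤ m) {e : ℤ} (he : e = 1 ∨ e = -1)
    {j : ℕ} (hj1 : 1 ≤ j) (hj2 : j ≤ 2*m) {a b c : ℤ}
    (hw : a.natAbs + b.natAbs + c.natAbs ≤ j)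
    (hr : Rp m (vT m 2 e j) a b c) :
    a = 0 ∧ b = 0 ∧ c = e*(j:ℤ) := by
  have hdvd := rp_dvd hr (rp_pure2 m e j)
  rcases he with he | he <;> subst he
  · have := master2 hm hj1 hj2 hw (by convert hdvd using 1; ring)
    refine ⟨this.1, this.2.1, by omega⟩
  · have hdvd' : (nN m) ∣ ((-a) + (-b)*sZ m + (-c)*tZ m - (j:ℤ)*tZ m) := by
      have heq : ((-a) + (-b)*sZ m + (-c)*tZ m - (j:ℤ)*tZ m) =
          -((a + b*sZ m + c*tZ m) - (0 + 0*sZ m + (-1)*(j:ℤ)*tZ m)) := by ring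
      rw [heq]
      exact hdvd.neg_right
    have := master2 hm hj1 hj2 (by omega) hdvd'
    refine ⟨by omega, by omega, by omega⟩

lemma cast_add_neg_cancel (m : ℕ) (v : ZMod (nNat m)) (z : ℤ) :
    v + (z : ZMod (nNat m)) + ((-z : ℤ) : ZMod (nNat m)) = v := by
  push_cast
  ring

lemma DD_vT0 {m : ℕ} (hm : 1 ≤ m) {e : ℤ} (he : e = 1 ∨ e = -1)
    {j : ℕ} (hj1 : 1 ≤ j) (hj2 : j ≤ 2*m) : DD m (vT m 0 e j) = j := by
  have hle : DD m (vT m 0 e j) ≤ j := by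
    have := DD_le m _ (rp_pure0 m e j)
    rcases he with he | he <;> subst he <;> simpa using this
  obtain ⟨a, b, c, hr, hw⟩ := DD_spec m (vT m 0 e j)
  obtain ⟨h1, h2, h3⟩ := master_sgn0 hm he hj1 hj2 (by omega) hr
  subst h1; subst h2; subst h3
  rcases he with he | he <;> subst he <;> simp at hw <;> omega

lemma DD_vT1 {m : ℕ} (hm : 1 ≤ m) {e : ℤ} (he : e = 1 ∨ e = -1)
    {j : ℕ} (hj1 : 1 ≤ j) (hj2 : j ≤ 2*m) : DD m (vT m 1 e j) = j := by
  have hle : DD m (vT m 1 e j) ≤ j := by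
    have := DD_le m _ (rp_pure1 m e j)
    rcases he with he | he <;> subst he <;> simpa using this
  obtain ⟨a, b, c, hr, hw⟩ := DD_spec m (vT m 1 e j)
  obtain ⟨h1, h2, h3⟩ := master_sgn1 hm he hj1 hj2 (by omega) hr
  subst h1; subst h2; subst h3
  rcases he with he | he <;> subst he <;> simp at hw <;> omega

lemma DD_vT2 {m : ℕ} (hm : 1 ≤ m) {e : ℤ} (he : e = 1 ∨ e = -1)
    {j : ℕ} (hj1 : 1 ≤ j) (hj2 : j ≤ 2*m) : DD m (vT m 2 e j) = j := by
  have hle : DD m (vT m 2 e j) ≤ j := by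
    have := DD_le m _ (rp_pure2 m e j)
    rcases he with he | he <;> subst he <;> simpa using this
  obtain ⟨a, b, c, hr, hw⟩ := DD_spec m (vT m 2 e j)
  obtain ⟨h1, h2, h3⟩ := master_sgn2 hm he hj1 hj2 (by omega) hr
  subst h1; subst h2; subst h3
  rcases he with he | he <;> subst he <;> simp at hw <;> omega

lemma adj_of_shift {m : ℕ} (hm : 1 ≤ m) (v : ZMod (nNat m)) (i : Fin 3) (e : ℤ)
    (he : e = 1 ∨ e = -1) :
    (GG m).Adj v (v + ((e * gZ m i : ℤ) : ZMod (nNat m))) := by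
  rw [adj_iff]
  refine ⟨?_, i, e, he, rfl⟩
  intro h
  exact sgen_ne_zero m hm i e he (left_eq_add.mp h)

lemma pset0 {m : ℕ} (hm : 1 ≤ m) {e : ℤ} (he : e = 1 ∨ e = -1)
    {j : ℕ} (hj1 : 1 ≤ j) (hj2 : j ≤ 2*m) :
    {u | (GG m).Adj (vT m 0 e j) u ∧ DD m u = DD m (vT m 0 e j) - 1} =
      {vT m 0 e j + (((-e) * gZ m 0 : ℤ) : ZMod (nNat m))} := by
  have hDv := DD_vT0 hm he hj1 hj2
  ext u
  simp only [Set.mem_setOf_eq, Set.mem_singleton_iff, hDv]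
  constructor
  · rintro ⟨hadj, hDu⟩
    rw [adj_iff] at hadj
    obtain ⟨hne, i', e', he', hu⟩ := hadj
    obtain ⟨a, b, c, hy, hwy⟩ := DD_spec m u
    rw [hDu] at hwy
    have hv : vT m 0 e j = u + (((-e') * gZ m i' : ℤ) : ZMod (nNat m)) := by
      rw [hu]
      have : (-e') * gZ m i' = -(e' * gZ m i') := by ring
      rw [this]
      exact (cast_add_neg_cancel m (vT m 0 e j) (e' * gZ m i')).symm
    fin_cases i'
    · have hrv : Rp m (vT m 0 e j) (a + (-e')) b c := by rw [hv]; exact rp_shift0 hy (-e')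
      obtain ⟨h1, h2, h3⟩ := master_sgn0 hm he hj1 hj2 (by rcases he' with h' | h' <;> subst h' <;> omega) hrv
      have he'e : e' = -e := by
        rcases he with h | h <;> rcases he' with h' | h' <;> subst h <;> subst h' <;> omega
      rw [hu, he'e]
      try rfl
    · have hrv : Rp m (vT m 0 e j) a (b + (-e')) c := by rw [hv]; exact rp_shift1 hy (-e')
      obtain ⟨h1, h2, h3⟩ := master_sgn0 hm he hj1 hj2 (by rcases he' with h' | h' <;> subst h' <;> omega) hrv
      exfalso
      rcases he with h | h <;> rcases he' with h' | h' <;> subst h <;> subst h' <;> omega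
    · have hrv : Rp m (vT m 0 e j) a b (c + (-e')) := by rw [hv]; exact rp_shift2 hy (-e')
      obtain ⟨h1, h2, h3⟩ := master_sgn0 hm he hj1 hj2 (by rcases he' with h' | h' <;> subst h' <;> omega) hrv
      exfalso
      rcases he with h | h <;> rcases he' with h' | h' <;> subst h <;> subst h' <;> omega
  · intro hu
    subst hu
    have hneg : -e = 1 ∨ -e = -1 := by rcases he with h | h <;> subst h <;> norm_num
    refine ⟨adj_of_shift hm _ 0 (-e) hneg, ?_⟩
    have hle : DD m (vT m 0 e j + (((-e) * gZ m 0 : ℤ) : ZMod (nNat m))) ≤ j - 1 := by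
      have hr := rp_shift0 (rp_pure0 m e j) (-e)
      have := DD_le m _ hr
      have hna : (e*(j:ℤ) + -e).natAbs = j - 1 := by
        rcases he with h | h <;> subst h <;> omega
      omega
    have hge := DD_lip m _ _ (adj_of_shift hm (vT m 0 e j) 0 (-e) hneg).symm
    omega

lemma pset1 {m : ℕ} (hm : 1 ≤ m) {e : ℤ} (he : e = 1 ∨ e = -1)
    {j : ℕ} (hj1 : 1 ≤ j) (hj2 : j ≤ 2*m) :
    {u | (GG m).Adj (vT m 1 e j) u ∧ DD m u = DD m (vT m 1 e j) - 1} =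
      {vT m 1 e j + (((-e) * gZ m 1 : ℤ) : ZMod (nNat m))} := by
  have hDv := DD_vT1 hm he hj1 hj2
  ext u
  simp only [Set.mem_setOf_eq, Set.mem_singleton_iff, hDv]
  constructor
  · rintro ⟨hadj, hDu⟩
    rw [adj_iff] at hadj
    obtain ⟨hne, i', e', he', hu⟩ := hadj
    obtain ⟨a, b, c, hy, hwy⟩ := DD_spec m u
    rw [hDu] at hwy
    have hv : vT m 1 e j = u + (((-e') * gZ m i' : ℤ) : ZMod (nNat m)) := by
      rw [hu]
      have : (-e') * gZ m i' = -(e' * gZ m i') := by ring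
      rw [this]
      exact (cast_add_neg_cancel m (vT m 1 e j) (e' * gZ m i')).symm
    fin_cases i'
    · have hrv : Rp m (vT m 1 e j) (a + (-e')) b c := by rw [hv]; exact rp_shift0 hy (-e')
      obtain ⟨h1, h2, h3⟩ := master_sgn1 hm he hj1 hj2 (by rcases he' with h' | h' <;> subst h' <;> omega) hrv
      exfalso
      rcases he with h | h <;> rcases he' with h' | h' <;> subst h <;> subst h' <;> omega
    · have hrv : Rp m (vT m 1 e j) a (b + (-e')) c := by rw [hv]; exact rp_shift1 hy (-e')
      obtain ⟨h1, h2, h3⟩ := master_sgn1 hm he hj1 hj2 (by rcases he' with h' | h' <;> subst h' <;> omega) hrv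
      have he'e : e' = -e := by
        rcases he with h | h <;> rcases he' with h' | h' <;> subst h <;> subst h' <;> omega
      rw [hu, he'e]
      try rfl
    · have hrv : Rp m (vT m 1 e j) a b (c + (-e')) := by rw [hv]; exact rp_shift2 hy (-e')
      obtain ⟨h1, h2, h3⟩ := master_sgn1 hm he hj1 hj2 (by rcases he' with h' | h' <;> subst h' <;> omega) hrv
      exfalso
      rcases he with h | h <;> rcases he' with h' | h' <;> subst h <;> subst h' <;> omega
  · intro hu
    subst hu
    have hneg : -e = 1 ∨ -e = -1 := by rcases he with h | h <;> subst h <;> norm_num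
    refine ⟨adj_of_shift hm _ 1 (-e) hneg, ?_⟩
    have hle : DD m (vT m 1 e j + (((-e) * gZ m 1 : ℤ) : ZMod (nNat m))) ≤ j - 1 := by
      have hr := rp_shift1 (rp_pure1 m e j) (-e)
      have := DD_le m _ hr
      have hna : (e*(j:ℤ) + -e).natAbs = j - 1 := by
        rcases he with h | h <;> subst h <;> omega
      omega
    have hge := DD_lip m _ _ (adj_of_shift hm (vT m 1 e j) 1 (-e) hneg).symm
    omega

lemma pset2 {m : ℕ} (hm : 1 ≤ m) {e : ℤ} (he : e = 1 ∨ e = -1)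
    {j : ℕ} (hj1 : 1 ≤ j) (hj2 : j ≤ 2*m) :
    {u | (GG m).Adj (vT m 2 e j) u ∧ DD m u = DD m (vT m 2 e j) - 1} =
      {vT m 2 e j + (((-e) * gZ m 2 : ℤ) : ZMod (nNat m))} := by
  have hDv := DD_vT2 hm he hj1 hj2
  ext u
  simp only [Set.mem_setOf_eq, Set.mem_singleton_iff, hDv]
  constructor
  · rintro ⟨hadj, hDu⟩
    rw [adj_iff] at hadj
    obtain ⟨hne, i', e', he', hu⟩ := hadj
    obtain ⟨a, b, c, hy, hwy⟩ := DD_spec m u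
    rw [hDu] at hwy
    have hv : vT m 2 e j = u + (((-e') * gZ m i' : ℤ) : ZMod (nNat m)) := by
      rw [hu]
      have : (-e') * gZ m i' = -(e' * gZ m i') := by ring
      rw [this]
      exact (cast_add_neg_cancel m (vT m 2 e j) (e' * gZ m i')).symm
    fin_cases i'
    · have hrv : Rp m (vT m 2 e j) (a + (-e')) b c := by rw [hv]; exact rp_shift0 hy (-e')
      obtain ⟨h1, h2, h3⟩ := master_sgn2 hm he hj1 hj2 (by rcases he' with h' | h' <;> subst h' <;> omega) hrv
      exfalso
      rcases he with h | h <;> rcases he' with h' | h' <;> subst h <;> subst h' <;> omega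
    · have hrv : Rp m (vT m 2 e j) a (b + (-e')) c := by rw [hv]; exact rp_shift1 hy (-e')
      obtain ⟨h1, h2, h3⟩ := master_sgn2 hm he hj1 hj2 (by rcases he' with h' | h' <;> subst h' <;> omega) hrv
      exfalso
      rcases he with h | h <;> rcases he' with h' | h' <;> subst h <;> subst h' <;> omega
    · have hrv : Rp m (vT m 2 e j) a b (c + (-e')) := by rw [hv]; exact rp_shift2 hy (-e')
      obtain ⟨h1, h2, h3⟩ := master_sgn2 hm he hj1 hj2 (by rcases he' with h' | h' <;> subst h' <;> omega) hrv
      have he'e : e' = -e := by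
        rcases he with h | h <;> rcases he' with h' | h' <;> subst h <;> subst h' <;> omega
      rw [hu, he'e]
      try rfl
  · intro hu
    subst hu
    have hneg : -e = 1 ∨ -e = -1 := by rcases he with h | h <;> subst h <;> norm_num
    refine ⟨adj_of_shift hm _ 2 (-e) hneg, ?_⟩
    have hle : DD m (vT m 2 e j + (((-e) * gZ m 2 : ℤ) : ZMod (nNat m))) ≤ j - 1 := by
      have hr := rp_shift2 (rp_pure2 m e j) (-e)
      have := DD_le m _ hr
      have hna : (e*(j:ℤ) + -e).natAbs = j - 1 := by
        rcases he with h | h <;> subst h <;> omega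
      omega
    have hge := DD_lip m _ _ (adj_of_shift hm (vT m 2 e j) 2 (-e) hneg).symm
    omega

lemma cast_nN_zero (m : ℕ) : ((nN m : ℤ) : ZMod (nNat m)) = 0 := by
  rw [← nNat_cast]
  exact_mod_cast ZMod.natCast_self (nNat m)

lemma rp_of_eq {m : ℕ} {v w : ZMod (nNat m)} {a b c a' b' c' z k : ℤ}
    (hr : Rp m v a b c) (hw : w = v + ((z : ℤ) : ZMod (nNat m)))
    (harg : a' + b'*sZ m + c'*tZ m = a + b*sZ m + c*tZ m + z + k * nN m) :
    Rp m w a' b' c' := by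
  simp only [Rp] at hr ⊢
  subst hw
  calc ((a' + b'*sZ m + c'*tZ m : ℤ) : ZMod (nNat m))
      = ((a + b*sZ m + c*tZ m + z + k * nN m : ℤ) : ZMod (nNat m)) := by rw [harg]
    _ = ((a + b*sZ m + c*tZ m : ℤ) : ZMod (nNat m)) + ((z:ℤ) : ZMod (nNat m))
        + ((k:ℤ) : ZMod (nNat m)) * ((nN m : ℤ) : ZMod (nNat m)) := by push_cast; ring
    _ = v + ((z:ℤ) : ZMod (nNat m)) := by rw [hr, cast_nN_zero]; ring

lemma mem_parent {m : ℕ} (hm : 1 ≤ m) (v : ZMod (nNat m)) (i : Fin 3) (e : ℤ)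
    (he : e = 1 ∨ e = -1) {a b c : ℤ}
    (hr : Rp m (v + ((e * gZ m i : ℤ) : ZMod (nNat m))) a b c)
    (hw : a.natAbs + b.natAbs + c.natAbs + 1 ≤ DD m v) :
    (GG m).Adj v (v + ((e * gZ m i : ℤ) : ZMod (nNat m))) ∧
      DD m (v + ((e * gZ m i : ℤ) : ZMod (nNat m))) = DD m v - 1 := by
  have hadj := adj_of_shift hm v i e he
  have h1 := DD_le m _ hr
  have h2 := DD_lip m _ _ hadj.symm
  exact ⟨hadj, by omega⟩

lemma sign_spec (a : ℤ) (ha : a ≠ 0) :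
    ∃ e : ℤ, (e = 1 ∨ e = -1) ∧ (a - e).natAbs + 1 = a.natAbs ∧ e * (a.natAbs:ℤ) = a := by
  rcases lt_or_gt_of_ne ha with h | h
  · exact ⟨-1, Or.inr rfl, by omega, by omega⟩
  · exact ⟨1, Or.inl rfl, by omega, by omega⟩

lemma shift_ne_shift {m : ℕ} (hm : 1 ≤ m) (v : ZMod (nNat m)) {i i' : Fin 3} {e e' : ℤ}
    (he : e = 1 ∨ e = -1) (he' : e' = 1 ∨ e' = -1) (hne : (i, e) ≠ (i', e')) :
    v + ((e * gZ m i : ℤ) : ZMod (nNat m)) ≠ v + ((e' * gZ m i' : ℤ) : ZMod (nNat m)) := by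
  intro h
  exact sgen_ne m hm i i' e e' he he' hne (by exact add_left_cancel h)

lemma two_parents {m : ℕ} (hm : 1 ≤ m) (v : ZMod (nNat m)) (hv : v ≠ 0)
    (hnot : ∀ (i : Fin 3) (e : ℤ), (e = 1 ∨ e = -1) → ∀ j : ℕ, 1 ≤ j → j ≤ 2*m →
      v ≠ vT m i e j) :
    ∃ u₁ u₂ : ZMod (nNat m), u₁ ≠ u₂ ∧
      ((GG m).Adj v u₁ ∧ DD m u₁ = DD m v - 1) ∧
      ((GG m).Adj v u₂ ∧ DD m u₂ = DD m v - 1) := by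
  obtain ⟨a, b, c, hr, hw⟩ := DD_spec m v
  have hDpos : DD m v ≠ 0 := fun h => hv (eq_zero_of_DD m v h)
  -- parent in slot 0/1/2 when that coordinate is nonzero
  have par0 : a ≠ 0 → ∃ e : ℤ, (e = 1 ∨ e = -1) ∧
      ((GG m).Adj v (v + ((e * gZ m 0 : ℤ) : ZMod (nNat m))) ∧
        DD m (v + ((e * gZ m 0 : ℤ) : ZMod (nNat m))) = DD m v - 1) := by
    intro ha
    obtain ⟨e, he, hd, _⟩ := sign_spec a ha
    have hne : -e = 1 ∨ -e = -1 := by rcases he with h | h <;> subst h <;> norm_num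
    exact ⟨-e, hne, mem_parent hm v 0 (-e) hne (by simpa using rp_shift0 hr (-e)) (by omega)⟩
  have par1 : b ≠ 0 → ∃ e : ℤ, (e = 1 ∨ e = -1) ∧
      ((GG m).Adj v (v + ((e * gZ m 1 : ℤ) : ZMod (nNat m))) ∧
        DD m (v + ((e * gZ m 1 : ℤ) : ZMod (nNat m))) = DD m v - 1) := by
    intro hb
    obtain ⟨e, he, hd, _⟩ := sign_spec b hb
    have hne : -e = 1 ∨ -e = -1 := by rcases he with h | h <;> subst h <;> norm_num
    exact ⟨-e, hne, mem_parent hm v 1 (-e) hne (by simpa using rp_shift1 hr (-e)) (by omega)⟩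
  have par2 : c ≠ 0 → ∃ e : ℤ, (e = 1 ∨ e = -1) ∧
      ((GG m).Adj v (v + ((e * gZ m 2 : ℤ) : ZMod (nNat m))) ∧
        DD m (v + ((e * gZ m 2 : ℤ) : ZMod (nNat m))) = DD m v - 1) := by
    intro hc
    obtain ⟨e, he, hd, _⟩ := sign_spec c hc
    have hne : -e = 1 ∨ -e = -1 := by rcases he with h | h <;> subst h <;> norm_num
    exact ⟨-e, hne, mem_parent hm v 2 (-e) hne (by simpa using rp_shift2 hr (-e)) (by omega)⟩
  by_cases ha : a = 0 <;> by_cases hb : b = 0 <;> by_cases hc : c = 0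
  · -- all zero: v = 0
    exfalso
    subst ha; subst hb; subst hc
    exact hDpos (by omega)
  · -- only c nonzero : v = vT 2 e j with j ≥ 2m+1
    subst ha; subst hb
    obtain ⟨e, he, hd, hsgn⟩ := sign_spec c hc
    set j : ℕ := c.natAbs with hj
    have hvT : v = vT m 2 e j := by
      simp only [Rp] at hr
      simp only [vT, ← hr]
      congr 1
      show (0:ℤ) + 0*sZ m + c*tZ m = e*(j:ℤ)*tZ m
      rw [← hsgn]; ring
    have hj1 : 1 ≤ j := by omega
    have hjbig : 2*m+1 ≤ j := by
      by_contra h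
      exact hnot 2 e he j hj1 (by omega) hvT
    have hDv : DD m v = j := by omega
    have hnege : -e = 1 ∨ -e = -1 := by rcases he with h | h <;> subst h <;> norm_num
    have hu₁ := mem_parent hm v 2 (-e) hnege (by simpa using rp_shift2 hr (-e)) (by omega)
    have hrep2 : Rp m (v + ((e * gZ m 1 : ℤ) : ZMod (nNat m))) 0 0 (c - e*(4*(m:ℤ)+1)) := by
      refine rp_of_eq (k := -2*e) hr rfl ?_
      show (0:ℤ) + 0*sZ m + (c - e*(4*(m:ℤ)+1))*tZ m
          = 0 + 0*sZ m + c*tZ m + e * sZ m + (-2*e) * nN m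
      simp only [sZ, tZ, nN]; ring
    have hu₂ := mem_parent hm v 1 e he hrep2 (by
      rcases he with h | h <;> subst h <;> omega)
    exact ⟨_, _, shift_ne_shift hm v hnege he (by simp), hu₁, hu₂⟩
  · -- only b nonzero : v = vT 1 e j with j ≥ 2m+1
    subst ha; subst hc
    obtain ⟨e, he, hd, hsgn⟩ := sign_spec b hb
    set j : ℕ := b.natAbs with hj
    have hvT : v = vT m 1 e j := by
      simp only [Rp] at hr
      simp only [vT, ← hr]
      congr 1
      show (0:ℤ) + b*sZ m + 0*tZ m = e*(j:ℤ)*sZ m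
      rw [← hsgn]; ring
    have hj1 : 1 ≤ j := by omega
    have hjbig : 2*m+1 ≤ j := by
      by_contra h
      exact hnot 1 e he j hj1 (by omega) hvT
    have hDv : DD m v = j := by omega
    have hnege : -e = 1 ∨ -e = -1 := by rcases he with h | h <;> subst h <;> norm_num
    have hu₁ := mem_parent hm v 1 (-e) hnege (by simpa using rp_shift1 hr (-e)) (by omega)
    have hrep2 : Rp m (v + ((e * gZ m 0 : ℤ) : ZMod (nNat m))) 0 (b - e*(4*(m:ℤ))) e := by
      refine rp_of_eq (k := 0) hr rfl ?_
      show (0:ℤ) + (b - e*(4*(m:ℤ)))*sZ m + e*tZ m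
          = 0 + b*sZ m + 0*tZ m + e * 1 + 0 * nN m
      simp only [sZ, tZ, nN]; ring
    have hu₂ := mem_parent hm v 0 e he hrep2 (by
      rcases he with h | h <;> subst h <;> omega)
    exact ⟨_, _, shift_ne_shift hm v hnege he (by simp), hu₁, hu₂⟩
  · -- b, c nonzero
    obtain ⟨e₁, he₁, hu₁⟩ := par1 hb
    obtain ⟨e₂, he₂, hu₂⟩ := par2 hc
    exact ⟨_, _, shift_ne_shift hm v he₁ he₂ (by simp), hu₁, hu₂⟩
  · -- only a nonzero : v = vT 0 e j with j ≥ 2m+1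
    subst hb; subst hc
    obtain ⟨e, he, hd, hsgn⟩ := sign_spec a ha
    set j : ℕ := a.natAbs with hj
    have hvT : v = vT m 0 e j := by
      simp only [Rp] at hr
      simp only [vT, ← hr]
      congr 1
      show a + (0:ℤ)*sZ m + 0*tZ m = e*(j:ℤ)*1
      rw [← hsgn]; ring
    have hj1 : 1 ≤ j := by omega
    have hjbig : 2*m+1 ≤ j := by
      by_contra h
      exact hnot 0 e he j hj1 (by omega) hvT
    have hDv : DD m v = j := by omega
    have hnege : -e = 1 ∨ -e = -1 := by rcases he with h | h <;> subst h <;> norm_num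
    have hu₁ := mem_parent hm v 0 (-e) hnege (by simpa using rp_shift0 hr (-e)) (by omega)
    have hrep2 : Rp m (v + (((-e) * gZ m 1 : ℤ) : ZMod (nNat m))) (a - e*(4*(m:ℤ)+1)) 0 0 := by
      refine rp_of_eq (k := 0) hr rfl ?_
      show a - e*(4*(m:ℤ)+1) + (0:ℤ)*sZ m + 0*tZ m
          = a + 0*sZ m + 0*tZ m + (-e) * sZ m + 0 * nN m
      simp only [sZ]; ring
    have hu₂ := mem_parent hm v 1 (-e) hnege hrep2 (by
      rcases he with h | h <;> subst h <;> omega)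
    exact ⟨_, _, shift_ne_shift hm v hnege hnege (by simp), hu₁, hu₂⟩
  · -- a, c nonzero
    obtain ⟨e₁, he₁, hu₁⟩ := par0 ha
    obtain ⟨e₂, he₂, hu₂⟩ := par2 hc
    exact ⟨_, _, shift_ne_shift hm v he₁ he₂ (by simp), hu₁, hu₂⟩
  · -- a, b nonzero
    obtain ⟨e₁, he₁, hu₁⟩ := par0 ha
    obtain ⟨e₂, he₂, hu₂⟩ := par1 hb
    exact ⟨_, _, shift_ne_shift hm v he₁ he₂ (by simp), hu₁, hu₂⟩
  · -- a, b nonzero (c too)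
    obtain ⟨e₁, he₁, hu₁⟩ := par0 ha
    obtain ⟨e₂, he₂, hu₂⟩ := par1 hb
    exact ⟨_, _, shift_ne_shift hm v he₁ he₂ (by simp), hu₁, hu₂⟩

lemma DD_vT {m : ℕ} (hm : 1 ≤ m) (i : Fin 3) {e : ℤ} (he : e = 1 ∨ e = -1)
    {j : ℕ} (hj1 : 1 ≤ j) (hj2 : j ≤ 2*m) : DD m (vT m i e j) = j := by
  fin_cases i
  · exact DD_vT0 hm he hj1 hj2
  · exact DD_vT1 hm he hj1 hj2
  · exact DD_vT2 hm he hj1 hj2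

lemma pset_vT {m : ℕ} (hm : 1 ≤ m) (i : Fin 3) {e : ℤ} (he : e = 1 ∨ e = -1)
    {j : ℕ} (hj1 : 1 ≤ j) (hj2 : j ≤ 2*m) :
    {u | (GG m).Adj (vT m i e j) u ∧ DD m u = DD m (vT m i e j) - 1} =
      {vT m i e j + (((-e) * gZ m i : ℤ) : ZMod (nNat m))} := by
  fin_cases i
  · exact pset0 hm he hj1 hj2
  · exact pset1 hm he hj1 hj2
  · exact pset2 hm he hj1 hj2

lemma vT_inj {m : ℕ} (hm : 1 ≤ m) {i i' : Fin 3} {e e' : ℤ} {j j' : ℕ}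
    (he : e = 1 ∨ e = -1) (he' : e' = 1 ∨ e' = -1)
    (hj1 : 1 ≤ j) (hj2 : j ≤ 2*m) (hj1' : 1 ≤ j') (hj2' : j' ≤ 2*m)
    (h : vT m i e j = vT m i' e' j') : i = i' ∧ e = e' ∧ j = j' := by
  have hjj : j = j' := by
    have h1 := DD_vT hm i he hj1 hj2
    have h2 := DD_vT hm i' he' hj1' hj2'
    rw [h] at h1
    omega
  subst hjj
  have hwt : ∀ x : ℤ, (x = 1 ∨ x = -1) →
      (x*(j:ℤ)).natAbs + (0:ℤ).natAbs + (0:ℤ).natAbs ≤ j ∧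
      (0:ℤ).natAbs + (x*(j:ℤ)).natAbs + (0:ℤ).natAbs ≤ j ∧
      (0:ℤ).natAbs + (0:ℤ).natAbs + (x*(j:ℤ)).natAbs ≤ j := by
    rintro x (rfl | rfl) <;> omega
  fin_cases i <;> fin_cases i'
  · have := master_sgn0 hm he hj1 hj2 (hwt e' he').1 (h ▸ rp_pure0 m e' j)
    refine ⟨rfl, ?_, rfl⟩
    rcases he with h1 | h1 <;> rcases he' with h2 | h2 <;> subst h1 <;> subst h2 <;> omega
  · have := master_sgn0 hm he hj1 hj2 (hwt e' he').2.1 (h ▸ rp_pure1 m e' j)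
    exfalso
    rcases he with h1 | h1 <;> rcases he' with h2 | h2 <;> subst h1 <;> subst h2 <;> omega
  · have := master_sgn0 hm he hj1 hj2 (hwt e' he').2.2 (h ▸ rp_pure2 m e' j)
    exfalso
    rcases he with h1 | h1 <;> rcases he' with h2 | h2 <;> subst h1 <;> subst h2 <;> omega
  · have := master_sgn1 hm he hj1 hj2 (hwt e' he').1 (h ▸ rp_pure0 m e' j)
    exfalso
    rcases he with h1 | h1 <;> rcases he' with h2 | h2 <;> subst h1 <;> subst h2 <;> omega
  · have := master_sgn1 hm he hj1 hj2 (hwt e' he').2.1 (h ▸ rp_pure1 m e' j)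
    refine ⟨rfl, ?_, rfl⟩
    rcases he with h1 | h1 <;> rcases he' with h2 | h2 <;> subst h1 <;> subst h2 <;> omega
  · have := master_sgn1 hm he hj1 hj2 (hwt e' he').2.2 (h ▸ rp_pure2 m e' j)
    exfalso
    rcases he with h1 | h1 <;> rcases he' with h2 | h2 <;> subst h1 <;> subst h2 <;> omega
  · have := master_sgn2 hm he hj1 hj2 (hwt e' he').1 (h ▸ rp_pure0 m e' j)
    exfalso
    rcases he with h1 | h1 <;> rcases he' with h2 | h2 <;> subst h1 <;> subst h2 <;> omega
  · have := master_sgn2 hm he hj1 hj2 (hwt e' he').2.1 (h ▸ rp_pure1 m e' j)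
    exfalso
    rcases he with h1 | h1 <;> rcases he' with h2 | h2 <;> subst h1 <;> subst h2 <;> omega
  · have := master_sgn2 hm he hj1 hj2 (hwt e' he').2.2 (h ▸ rp_pure2 m e' j)
    refine ⟨rfl, ?_, rfl⟩
    rcases he with h1 | h1 <;> rcases he' with h2 | h2 <;> subst h1 <;> subst h2 <;> omega

lemma vT_ne_zero {m : ℕ} (hm : 1 ≤ m) (i : Fin 3) {e : ℤ} (he : e = 1 ∨ e = -1)
    {j : ℕ} (hj1 : 1 ≤ j) (hj2 : j ≤ 2*m) : vT m i e j ≠ 0 := by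
  intro h
  have h1 := DD_vT hm i he hj1 hj2
  rw [h, DD_zero] at h1
  omega

theorem key (m : ℕ) (hm : 1 ≤ m) :
    {v : ZMod (nNat m) | v ≠ 0 ∧
      {u : ZMod (nNat m) | (GG m).Adj v u ∧ (GG m).dist 0 u = (GG m).dist 0 v - 1}.ncard
        = 1}.ncard = 12*m := by
  have hdist : ∀ w : ZMod (nNat m), (GG m).dist 0 w = DD m w := dist_eq_DD m hm
  simp only [hdist]
  set F : Finset (Fin 3 × ℤ × ℕ) :=
    Finset.univ ×ˢ ({1, -1} : Finset ℤ) ×ˢ Finset.Icc 1 (2*m) with hF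
  set TFin : Finset (ZMod (nNat m)) := F.image (fun p => vT m p.1 p.2.1 p.2.2) with hTFin
  have hmemF : ∀ p : Fin 3 × ℤ × ℕ, p ∈ F ↔
      (p.2.1 = 1 ∨ p.2.1 = -1) ∧ 1 ≤ p.2.2 ∧ p.2.2 ≤ 2*m := by
    intro p
    simp [hF, Finset.mem_product]
  have hmemT : ∀ v : ZMod (nNat m), v ∈ TFin ↔ ∃ p ∈ F, vT m p.1 p.2.1 p.2.2 = v := by
    intro v
    rw [hTFin, Finset.mem_image]
  have hset : {v : ZMod (nNat m) | v ≠ 0 ∧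
      {u : ZMod (nNat m) | (GG m).Adj v u ∧ DD m u = DD m v - 1}.ncard = 1} = ↑TFin := by
    ext v
    simp only [Set.mem_setOf_eq, Finset.mem_coe, hmemT]
    constructor
    · rintro ⟨hv0, hcard⟩
      by_contra hno
      push_neg at hno
      have hnot : ∀ (i : Fin 3) (e : ℤ), (e = 1 ∨ e = -1) → ∀ j : ℕ, 1 ≤ j → j ≤ 2*m →
          v ≠ vT m i e j := by
        intro i e he j hj1 hj2 hv
        exact hno (i, e, j) ((hmemF (i, e, j)).mpr ⟨he, hj1, hj2⟩) hv.symm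
      obtain ⟨u₁, u₂, hne, h1, h2⟩ := two_parents hm v hv0 hnot
      have hsub : ({u₁, u₂} : Set (ZMod (nNat m))) ⊆
          {u : ZMod (nNat m) | (GG m).Adj v u ∧ DD m u = DD m v - 1} := by
        intro x hx
        rcases hx with rfl | hx
        · exact h1
        · rw [Set.mem_singleton_iff] at hx
          subst hx
          exact h2
      have h2le : 2 ≤ {u : ZMod (nNat m) | (GG m).Adj v u ∧ DD m u = DD m v - 1}.ncard := by
        rw [← Set.ncard_pair hne]
        exact Set.ncard_le_ncard hsub (Set.toFinite _)
      omega
    · rintro ⟨p, hpF, hpv⟩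
      obtain ⟨he, hj1, hj2⟩ := (hmemF p).mp hpF
      subst hpv
      refine ⟨vT_ne_zero hm p.1 he hj1 hj2, ?_⟩
      rw [pset_vT hm p.1 he hj1 hj2]
      exact Set.ncard_singleton _
  rw [hset, Set.ncard_coe_finset, hTFin]
  rw [Finset.card_image_of_injOn]
  · rw [hF, Finset.card_product, Finset.card_product]
    have h2 : ({1, -1} : Finset ℤ).card = 2 := by decide
    simp [h2, Nat.card_Icc]
    omega
  · rintro ⟨pi, pe, pj⟩ hp ⟨qi, qe, qj⟩ hq hpq
    simp only [Finset.coe_mem, Finset.mem_coe] at hp hq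
    obtain ⟨he, hj1, hj2⟩ := (hmemF (pi, pe, pj)).mp (by simpa using hp)
    obtain ⟨he', hj1', hj2'⟩ := (hmemF (qi, qe, qj)).mp (by simpa using hq)
    obtain ⟨h1, h2, h3⟩ := vT_inj hm he he' hj1 hj2 hj1' hj2' hpq
    subst h1; subst h2; subst h3
    rfl

/-- The largest known circulant graph of degree 6 and diameter `k = 3m` (isomorphism
class 1; order `n = 32m³+16m²+6m+1`, generators `1`, `4m+1`, `16m²+4m+1`) has exactly
`4k = 12m` type `T₁` vertices, i.e. vertices `v ≠ 0` with exactly one neighbour at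
distance `dist(0,v) − 1` from `0`. -/
theorem stmt15 (m : ℕ) (hm : 1 ≤ m) :
    let n : ℕ := 32*m^3+16*m^2+6*m+1
    let X := circulant n ![(1 : ℤ), 4*(m : ℤ)+1, 16*(m : ℤ)^2+4*m+1]
    {v : ZMod n | v ≠ 0 ∧
      {u : ZMod n | X.Adj v u ∧ X.dist 0 u = X.dist 0 v - 1}.ncard = 1}.ncard = 12*m := by
  exact key m hm
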